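/- Let n, r be positive integers, let A ⊆ {1,...,n}, let x ∈ A, and suppose there exist m pairwise disjoint pairs {u₁,v₁},...,{u_m,v_m} of distinct elements of A \ {x} such that for each i, {uᵢ, vᵢ, x} is a Schur triple (i.e. some permutation satisfies a + b = c) with uᵢ, vᵢ, x distinct. Then the number of colourings σ : A → {1,...,r} with no monochromatic Schur triple is at most (r² − 1)^m · r^(|A| − 2m). -/

import Mathlib

/-- If the link graph of `x` in `A \ {x}` contains a matching of size `m`
(given by pairs `{u i, v i}` of distinct elements of `A \ {x}` forming Schur
triples with `x`), then the number of `r`-colourings of `A` with no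
monochromatic Schur triple is at most `(r² − 1)^m · r^(|A| − 2m)`. -/
theorem matching_bounds_colourings (n r : ℕ) (hn : 1 ≤ n) (hr : 1 ≤ r)
    (A : Finset ℕ) (hA : A ⊆ Finset.Icc 1 n) (x : ℕ) (hx : x ∈ A)
    (m : ℕ) (u v : Fin m → ℕ)
    (huv : ∀ i, u i ∈ A.erase x ∧ v i ∈ A.erase x)
    (hdisj : Function.Injective (fun p : Fin m × Bool => if p.2 then u p.1 else v p.1))
    (hschur : ∀ i, u i + v i = x ∨ u i + x = v i ∨ v i + x = u i) :
    (Finset.univ.filter (fun σ : A → Fin r =>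
      ∀ a b c : A, σ a = σ b → σ b = σ c → (a : ℕ) + (b : ℕ) ≠ (c : ℕ))).card
      ≤ (r ^ 2 - 1) ^ m * r ^ (A.card - 2 * m) := by
  classical
  set M : Finset ℕ :=
    Finset.image (fun p : Fin m × Bool => if p.2 then u p.1 else v p.1) Finset.univ with hM
  have huA : ∀ i, u i ∈ A := fun i => Finset.mem_of_mem_erase (huv i).1
  have hvA : ∀ i, v i ∈ A := fun i => Finset.mem_of_mem_erase (huv i).2
  have hMA : M ⊆ A := by
    intro a ha
    simp only [hM, Finset.mem_image] at ha
    obtain ⟨⟨i, b⟩, -, rfl⟩ := ha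
    cases b <;> simp [huA, hvA]
  have hxM : x ∉ M := by
    intro h
    simp only [hM, Finset.mem_image] at h
    obtain ⟨⟨i, b⟩, -, h⟩ := h
    cases b
    · exact (Finset.ne_of_mem_erase (huv i).2) (by simpa using h)
    · exact (Finset.ne_of_mem_erase (huv i).1) (by simpa using h)
  set B : Finset ℕ := A \ M with hB
  have hBA : B ⊆ A := Finset.sdiff_subset
  have hxB : x ∈ B := Finset.mem_sdiff.2 ⟨hx, hxM⟩
  have hMcard : M.card = 2 * m := by
    rw [hM, Finset.card_image_of_injective _ hdisj]
    simp [Finset.card_univ, mul_comm]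
  have hBcard : B.card = A.card - 2 * m := by
    rw [hB, Finset.card_sdiff_of_subset hMA, hMcard]
  set T := Finset.univ.sigma (fun f : (B → Fin r) =>
    Finset.univ.filter (fun g : Fin m → Fin r × Fin r =>
      ∀ i, g i ≠ (f ⟨x, hxB⟩, f ⟨x, hxB⟩))) with hT
  have hTcard : T.card = r ^ (A.card - 2 * m) * (r ^ 2 - 1) ^ m := by
    rw [hT, Finset.card_sigma]
    have hconst : ∀ f : B → Fin r,
        (Finset.univ.filter (fun g : Fin m → Fin r × Fin r =>
          ∀ i, g i ≠ (f ⟨x, hxB⟩, f ⟨x, hxB⟩))).card = (r ^ 2 - 1) ^ m := by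
      intro f
      set d := (f ⟨x, hxB⟩, f ⟨x, hxB⟩) with hd
      rw [← Fintype.card_subtype]
      rw [Fintype.card_congr (Equiv.subtypePiEquivPi (p := fun _ q => q ≠ d))]
      rw [Fintype.card_pi]
      have : Fintype.card {q : Fin r × Fin r // q ≠ d} = r ^ 2 - 1 := by
        have h0 : Fintype.card {q : Fin r × Fin r // ¬ (q = d)}
            = Fintype.card (Fin r × Fin r) - Fintype.card {q : Fin r × Fin r // q = d} :=
          Fintype.card_subtype_compl _
        simpa [Fintype.card_subtype_eq, sq] using h0
      simp [this]
    simp only [hconst, Finset.sum_const, Finset.card_univ, smul_eq_mul]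
    rw [Fintype.card_pi]
    simp [hBcard, Finset.prod_const]
  have hle : (Finset.univ.filter (fun σ : A → Fin r =>
      ∀ a b c : A, σ a = σ b → σ b = σ c → (a : ℕ) + (b : ℕ) ≠ (c : ℕ))).card ≤ T.card := by
    apply Finset.card_le_card_of_injOn
      (fun σ => ⟨fun b => σ ⟨b.1, hBA b.2⟩,
        fun i => (σ ⟨u i, huA i⟩, σ ⟨v i, hvA i⟩)⟩)
    · intro σ hσ
      simp only [Finset.mem_coe, Finset.mem_filter, Finset.mem_univ, true_and] at hσ
      simp only [Finset.mem_coe, hT, Finset.mem_sigma, Finset.mem_univ, Finset.mem_filter, true_and]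
      intro i hi
      have h1 : σ ⟨u i, huA i⟩ = σ ⟨x, hx⟩ := congrArg Prod.fst hi
      have h2 : σ ⟨v i, hvA i⟩ = σ ⟨x, hx⟩ := congrArg Prod.snd hi
      rcases hschur i with h | h | h
      · exact hσ ⟨u i, huA i⟩ ⟨v i, hvA i⟩ ⟨x, hx⟩ (h1.trans h2.symm) h2 h
      · exact hσ ⟨u i, huA i⟩ ⟨x, hx⟩ ⟨v i, hvA i⟩ h1 h2.symm h
      · exact hσ ⟨v i, hvA i⟩ ⟨x, hx⟩ ⟨u i, huA i⟩ h2 h1.symm h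
    · intro σ hσ τ hτ heq
      simp only [Sigma.mk.inj_iff] at heq
      obtain ⟨hf, hg⟩ := heq
      have hg' : (fun i => (σ ⟨u i, huA i⟩, σ ⟨v i, hvA i⟩))
          = (fun i => (τ ⟨u i, huA i⟩, τ ⟨v i, hvA i⟩)) := eq_of_heq hg
      funext a
      by_cases ha : (a : ℕ) ∈ M
      · simp only [hM, Finset.mem_image] at ha
        obtain ⟨⟨i, b⟩, -, hab⟩ := ha
        cases b
        · have hav : a = ⟨v i, hvA i⟩ := Subtype.ext (by simpa using hab.symm)
          rw [hav]
          exact congrArg Prod.snd (congrFun hg' i)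
        · have hau : a = ⟨u i, huA i⟩ := Subtype.ext (by simpa using hab.symm)
          rw [hau]
          exact congrArg Prod.fst (congrFun hg' i)
      · have haB : (a : ℕ) ∈ B := Finset.mem_sdiff.2 ⟨a.2, ha⟩
        have := congrFun hf ⟨(a : ℕ), haB⟩
        simpa using this
  calc (Finset.univ.filter (fun σ : A → Fin r =>
      ∀ a b c : A, σ a = σ b → σ b = σ c → (a : ℕ) + (b : ℕ) ≠ (c : ℕ))).card
      ≤ T.card := hle
    _ = (r ^ 2 - 1) ^ m * r ^ (A.card - 2 * m) := by rw [hTcard, mul_comm]
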